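/- (KL vs Hellinger under bounded ratio, Birgé–Massart generalization) Let L be a real random variable with E[e^{-η̄L}] ≤ 1 for some η̄ > 0, and suppose L ≤ u almost surely for some u > 0. Then for every η ∈ (0, η̄), E[L] ≤ c_u · (1/η)(1 - E[e^{-ηL}]), where c_u = (ηu + 1)/(1 - η/η̄). -/

import Mathlib

open MeasureTheory Real

lemma T_anti {a b : ℝ} (ha : 0 < a) (hab : a ≤ b) :
    a^2*(1-(1+b)*Real.exp (-b)) ≤ b^2*(1-(1+a)*Real.exp (-a)) := by
  set A := 1 - (1+a)*Real.exp (-a) with hA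
  have hquad : 1 + a + a^2/2 ≤ Real.exp a := Real.quadratic_le_exp_of_nonneg ha.le
  have hprod : Real.exp (-a) * Real.exp a = 1 := by rw [← Real.exp_add]; simp
  have hexppos : (0:ℝ) < Real.exp (-a) := Real.exp_pos _
  have hkey : a^2 * Real.exp (-a) ≤ 2*A := by
    rw [hA]; nlinarith [hquad, hprod, hexppos]
  set k : ℝ → ℝ := fun t => t^2*A - a^2*(1-(1+t)*Real.exp (-t)) with hk
  have hd : ∀ t : ℝ, HasDerivAt k (t * (2*A - a^2 * Real.exp (-t))) t := by
    intro t
    have h0 : HasDerivAt (fun y : ℝ => -y) (-1) t := (hasDerivAt_id t).neg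
    have hE : HasDerivAt (fun y : ℝ => Real.exp (-y)) (Real.exp (-t) * (-1)) t := h0.exp
    have h1 : HasDerivAt (fun y : ℝ => (1+y)*Real.exp (-y))
        (1 * Real.exp (-t) + (1+t) * (Real.exp (-t) * (-1))) t :=
      (((hasDerivAt_id t).const_add 1)).mul hE
    have h2 : HasDerivAt (fun y : ℝ => y^2*A) (2*t*A) t := by
      simpa using ((hasDerivAt_pow 2 t).mul_const A)
    have := h2.sub ((h1.const_sub 1).const_mul (a^2))
    refine this.congr_deriv ?_
    ring
  have hmono : MonotoneOn k (Set.Ici a) := by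
    apply monotoneOn_of_deriv_nonneg (convex_Ici a)
    · exact (Continuous.continuousOn (by continuity))
    · intro t ht
      exact (hd t).differentiableAt.differentiableWithinAt
    · intro t ht
      rw [interior_Ici] at ht
      rw [(hd t).deriv]
      have hta : a ≤ t := le_of_lt ht
      have : Real.exp (-t) ≤ Real.exp (-a) := Real.exp_le_exp.mpr (by linarith)
      have h2A : a^2 * Real.exp (-t) ≤ 2*A := le_trans (by nlinarith [sq_nonneg a]) hkey
      have htpos : 0 < t := lt_of_lt_of_le ha hta
      nlinarith
  have hka : k a = 0 := by simp [hk, hA]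
  have := hmono (Set.self_mem_Ici) (by exact hab : b ∈ Set.Ici a) hab
  rw [hka] at this
  simp only [hk] at this
  linarith

lemma pointwise_ineq {η ηb u : ℝ} (hη : 0 < η) (hlt : η < ηb) (hu : 0 < u) :
    ∀ x ≤ u, x ≤ (η*u+1)/(1-η/ηb)/η * (1 - Real.exp (-η * x))
      + ((η*u+1)/(1-η/ηb) - 1)/ηb * (Real.exp (-ηb * x) - 1) := by
  have hηb : (0:ℝ) < ηb := hη.trans hlt
  have hρ : (0:ℝ) < 1 - η/ηb := by
    have : η/ηb < 1 := (div_lt_one hηb).mpr hlt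
    linarith
  obtain ⟨c, hc⟩ : ∃ c : ℝ, c = (η*u+1)/(1-η/ηb) := ⟨_, rfl⟩
  obtain ⟨lam, hlam⟩ : ∃ l : ℝ, l = (c-1)/ηb := ⟨_, rfl⟩
  have hc1 : c * (1-η/ηb) = η*u+1 := by rw [hc]; exact div_mul_cancel₀ _ hρ.ne'
  have hcex : c - 1 = c*(η/ηb) + η*u := by linear_combination hc1
  have hc1le : 1 ≤ c := by
    rw [hc, le_div_iff₀ hρ]
    have := div_pos hη hηb
    nlinarith [mul_pos hη hu]
  have hlamηb : lam * ηb = c - 1 := by rw [hlam]; exact div_mul_cancel₀ _ hηb.ne'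
  have hlampos : 0 ≤ lam := hlam ▸ div_nonneg (by linarith) hηb.le
  have hcoef : c * η ≤ (c-1)*ηb := by
    have h2 : (c-1)*ηb = c*η + η*u*ηb := by
      rw [hcex]; field_simp
    nlinarith [mul_pos (mul_pos hη hu) hηb]
  -- the function φ
  obtain ⟨φ, hφ⟩ : ∃ φ : ℝ → ℝ, φ = fun t => c/η*(1-Real.exp (-η*t)) + lam*(Real.exp (-ηb*t)-1) - t := ⟨_, rfl⟩
  have hφ0 : φ 0 = 0 := by simp [hφ]
  have hφd : ∀ t : ℝ, HasDerivAt φ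
      (c * Real.exp (-η*t) - (c-1)*Real.exp (-ηb*t) - 1) t := by
    intro t
    have hE1 : HasDerivAt (fun y : ℝ => Real.exp (-η*y)) (Real.exp (-η*t) * (-η)) t := by
      have : HasDerivAt (fun y : ℝ => -η*y) (-η) t := by
        simpa using (hasDerivAt_id t).const_mul (-η)
      exact this.exp
    have hE2 : HasDerivAt (fun y : ℝ => Real.exp (-ηb*y)) (Real.exp (-ηb*t) * (-ηb)) t := by
      have : HasDerivAt (fun y : ℝ => -ηb*y) (-ηb) t := by
        simpa using (hasDerivAt_id t).const_mul (-ηb)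
      exact this.exp
    rw [hφ]
    have h := (((hE1.const_sub 1).const_mul (c/η)).add ((hE2.sub_const 1).const_mul lam)).sub
      (hasDerivAt_id t)
    refine h.congr_deriv ?_
    symm
    have hcc : c / η * η = c := div_mul_cancel₀ c hη.ne'
    try simp only [id_eq]
    linear_combination (-Real.exp (-η*t)) * hcc + (Real.exp (-ηb*t)) * hlamηb
  have hφdiff : Differentiable ℝ φ := fun t => (hφd t).differentiableAt
  -- endpoint: 0 ≤ φ u
  have hend : 0 ≤ φ u := by
    have hK := T_anti (a := η*u) (b := ηb*u) (mul_pos hη hu) (by nlinarith [mul_le_mul_of_nonneg_right hlt.le hu.le])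
    have hne : ηb - η ≠ 0 := sub_ne_zero.mpr hlt.ne'
    have heq : φ u = ((ηb*u)^2*(1-(1+η*u)*Real.exp (-(η*u)))
        - (η*u)^2*(1-(1+ηb*u)*Real.exp (-(ηb*u)))) / (η*ηb*(ηb-η)*u^2) := by
      have hdenpos : 0 < η*ηb*(ηb-η)*u^2 :=
        mul_pos (mul_pos (mul_pos hη hηb) (sub_pos.mpr hlt)) (by positivity)
      simp only [hφ]
      rw [hlam, hc, eq_div_iff hdenpos.ne']
      field_simp
      ring
    rw [heq]
    apply div_nonneg _ (mul_pos (mul_pos (mul_pos hη hηb) (sub_pos.mpr hlt)) (by positivity : (0:ℝ) < u^2)).le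
    rw [sub_nonneg]
    exact hK
  -- Case x ≤ 0 : φ' ≤ 0 there (Bernoulli)
  have hneg : ∀ t ≤ (0:ℝ), c * Real.exp (-η*t) - (c-1)*Real.exp (-ηb*t) - 1 ≤ 0 := by
    intro t ht
    set s : ℝ := Real.exp (-η*t) with hs
    have hs1 : 1 ≤ s := Real.one_le_exp (by nlinarith)
    have hp : 1 ≤ ηb/η := (one_le_div hη).mpr hlt.le
    have hbern : 1 + (ηb/η) * (s - 1) ≤ (1 + (s-1)) ^ (ηb/η) :=
      one_add_mul_self_le_rpow_one_add (by linarith) hp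
    have hpow : (1 + (s-1)) ^ (ηb/η) = Real.exp (-ηb*t) := by
      rw [show (1 + (s-1)) = s by ring, hs, ← Real.exp_mul]
      congr 1
      field_simp
    rw [hpow] at hbern
    have h2 : (c-1) * (1 + (ηb/η)*(s-1)) ≤ (c-1) * Real.exp (-ηb*t) :=
      mul_le_mul_of_nonneg_left hbern (by linarith)
    have hd : 0 ≤ ((c-1)*(ηb/η) - c) * (s - 1) := by
      apply mul_nonneg _ (by linarith)
      rw [sub_nonneg, mul_div_assoc', le_div_iff₀ hη]
      linarith
    nlinarith [hd, h2]
  -- w and its concavity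
  obtain ⟨w, hw⟩ : ∃ w : ℝ → ℝ, w = fun t => c - (c-1)*Real.exp (-(ηb-η)*t) - Real.exp (η*t) := ⟨_, rfl⟩
  have hw0 : w 0 = 0 := by simp [hw]
  have hwd : ∀ t : ℝ, HasDerivAt w
      ((c-1)*(ηb-η)*Real.exp (-(ηb-η)*t) - η*Real.exp (η*t)) t := by
    intro t
    have hE1 : HasDerivAt (fun y : ℝ => Real.exp (-(ηb-η)*y)) (Real.exp (-(ηb-η)*t) * (-(ηb-η))) t := by
      have : HasDerivAt (fun y : ℝ => -(ηb-η)*y) (-(ηb-η)) t := by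
        simpa using (hasDerivAt_id t).const_mul (-(ηb-η))
      exact this.exp
    have hE2 : HasDerivAt (fun y : ℝ => Real.exp (η*y)) (Real.exp (η*t) * η) t := by
      have : HasDerivAt (fun y : ℝ => η*y) (η) t := by
        simpa using (hasDerivAt_id t).const_mul η
      exact this.exp
    rw [hw]
    have h := ((hE1.const_mul (c-1)).const_sub c).sub hE2
    refine h.congr_deriv ?_
    ring
  have hwderiv : deriv w = fun t => (c-1)*(ηb-η)*Real.exp (-(ηb-η)*t) - η*Real.exp (η*t) :=
    funext fun t => (hwd t).deriv
  have hwconc : ConcaveOn ℝ Set.univ w := by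
    apply concaveOn_of_deriv2_nonpos' convex_univ
    · exact fun t _ => (hwd t).differentiableAt.differentiableWithinAt
    · rw [hwderiv]
      intro t _
      apply DifferentiableAt.differentiableWithinAt
      fun_prop
    · intro t _
      have hd2 : HasDerivAt (deriv w)
          (((c-1)*(ηb-η)) * (Real.exp (-(ηb-η)*t) * (-(ηb-η))) - η*(Real.exp (η*t) * η)) t := by
        rw [hwderiv]
        have hE1 : HasDerivAt (fun y : ℝ => Real.exp (-(ηb-η)*y)) (Real.exp (-(ηb-η)*t) * (-(ηb-η))) t := by
          have : HasDerivAt (fun y : ℝ => -(ηb-η)*y) (-(ηb-η)) t := by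
            simpa using (hasDerivAt_id t).const_mul (-(ηb-η))
          exact this.exp
        have hE2 : HasDerivAt (fun y : ℝ => Real.exp (η*y)) (Real.exp (η*t) * η) t := by
          have : HasDerivAt (fun y : ℝ => η*y) (η) t := by
            simpa using (hasDerivAt_id t).const_mul η
          exact this.exp
        exact (hE1.const_mul ((c-1)*(ηb-η))).sub (hE2.const_mul η)
      show deriv (deriv w) t ≤ 0
      rw [hd2.deriv]
      have e1 : (0:ℝ) < Real.exp (-(ηb-η)*t) := Real.exp_pos _
      have e2 : (0:ℝ) < Real.exp (η*t) := Real.exp_pos _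
      have hδ : (0:ℝ) < ηb - η := sub_pos.mpr hlt
      nlinarith [mul_pos (mul_pos hη hη) e2, mul_pos (mul_pos hδ hδ) e1,
        mul_nonneg (mul_nonneg (sub_nonneg.mpr hc1le) (mul_pos hδ hδ).le) e1.le]
  -- relation φ' = e^{-ηy} * w y
  have hrel : ∀ y : ℝ, c * Real.exp (-η*y) - (c-1)*Real.exp (-ηb*y) - 1
      = Real.exp (-η*y) * w y := by
    intro y
    have h1 : Real.exp (-η*y) * Real.exp (-(ηb-η)*y) = Real.exp (-ηb*y) := by
      rw [← Real.exp_add]; congr 1; ring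
    have h2 : Real.exp (-η*y) * Real.exp (η*y) = 1 := by
      rw [← Real.exp_add]; simp
    simp only [hw]
    linear_combination (c-1) * h1 + h2
  -- main argument
  intro x hx
  rw [← sub_nonneg]
  have goalφ : (η*u+1)/(1-η/ηb)/η * (1 - Real.exp (-η * x))
      + ((η*u+1)/(1-η/ηb) - 1)/ηb * (Real.exp (-ηb * x) - 1) - x = φ x := by
    rw [← hc, ← hlam, hφ]
  rw [goalφ]
  rcases le_or_gt x 0 with hx0 | hx0
  · have hanti : AntitoneOn φ (Set.Icc x 0) := by
      apply antitoneOn_of_deriv_nonpos (convex_Icc x 0) hφdiff.continuous.continuousOn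
        hφdiff.differentiableOn
      intro t ht
      rw [interior_Icc] at ht
      rw [(hφd t).deriv]
      exact hneg t ht.2.le
    have := hanti (Set.mem_Icc.mpr ⟨le_refl x, hx0⟩) (Set.mem_Icc.mpr ⟨hx0, le_refl 0⟩) hx0
    rw [hφ0] at this
    exact this
  · rcases le_or_gt 0 (w x) with hwx | hwx
    · -- w ≥ 0 on (0,x), φ monotone on [0,x]
      have hwpos : ∀ y ∈ Set.Ioo (0:ℝ) x, 0 ≤ w y := by
        intro y hy
        have hxne : x ≠ 0 := hx0.ne'
        have h' := hwconc.2 (Set.mem_univ (0:ℝ)) (Set.mem_univ x)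
          (div_nonneg (by linarith [hy.2] : (0:ℝ) ≤ x - y) hx0.le)
          (div_nonneg hy.1.le hx0.le)
          (by field_simp; ring : (x-y)/x + y/x = 1)
        simp only [smul_eq_mul, mul_zero, zero_add, hw0] at h'
        rw [div_mul_cancel₀ y hx0.ne'] at h'
        have : 0 ≤ y/x * w x := mul_nonneg (div_nonneg hy.1.le hx0.le) hwx
        linarith
      have hmono : MonotoneOn φ (Set.Icc 0 x) := by
        apply monotoneOn_of_deriv_nonneg (convex_Icc 0 x) hφdiff.continuous.continuousOn
          hφdiff.differentiableOn
        intro t ht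
        rw [interior_Icc] at ht
        rw [(hφd t).deriv, hrel t]
        exact mul_nonneg (Real.exp_pos _).le (hwpos t ht)
      have := hmono (Set.mem_Icc.mpr ⟨le_refl 0, hx0.le⟩) (Set.mem_Icc.mpr ⟨hx0.le, le_refl x⟩) hx0.le
      rw [hφ0] at this
      exact this
    · -- w < 0 on (x,u), φ antitone on [x,u]
      have hwneg : ∀ y ∈ Set.Ioo x u, w y ≤ 0 := by
        intro y hy
        have hypos : 0 < y := hx0.trans hy.1
        have hyne : y ≠ 0 := hypos.ne'
        have h' := hwconc.2 (Set.mem_univ (0:ℝ)) (Set.mem_univ y)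
          (div_nonneg (by linarith [hy.1] : (0:ℝ) ≤ y - x) hypos.le)
          (div_nonneg hx0.le hypos.le)
          (by field_simp; ring : (y-x)/y + x/y = 1)
        simp only [smul_eq_mul, mul_zero, zero_add, hw0] at h'
        rw [div_mul_cancel₀ x hypos.ne'] at h'
        -- h' : x/y * w y ≤ w x < 0
        by_contra hcon
        push_neg at hcon
        have : 0 < x/y * w y := mul_pos (div_pos hx0 hypos) hcon
        linarith
      have hanti : AntitoneOn φ (Set.Icc x u) := by
        apply antitoneOn_of_deriv_nonpos (convex_Icc x u) hφdiff.continuous.continuousOn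
          hφdiff.differentiableOn
        intro t ht
        rw [interior_Icc] at ht
        rw [(hφd t).deriv, hrel t]
        exact mul_nonpos_of_nonneg_of_nonpos (Real.exp_pos _).le (hwneg t ht)
      have := hanti (Set.mem_Icc.mpr ⟨le_refl x, hx⟩) (Set.mem_Icc.mpr ⟨hx, le_refl u⟩) hx
      exact le_trans hend this

/-- Birgé–Massart generalization: if `E[e^{-η̄ L}] ≤ 1` and `L ≤ u` a.s. with `u > 0`,
then for every `η ∈ (0, η̄)`:
`E[L] ≤ ((ηu + 1)/(1 - η/η̄)) · (1/η)(1 - E[e^{-ηL}])`. -/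
theorem kl_le_hellinger_of_bounded_ratio
    {Ω : Type*} [MeasurableSpace Ω] (μ : Measure Ω) [IsProbabilityMeasure μ]
    (L : Ω → ℝ) {ηbar u : ℝ} (hηbar : 0 < ηbar) (hu : 0 < u)
    (hL : Integrable L μ)
    (hcentralInt : Integrable (fun ω => Real.exp (-ηbar * L ω)) μ)
    (hcentral : ∫ ω, Real.exp (-ηbar * L ω) ∂μ ≤ 1)
    (hbdd : ∀ᵐ ω ∂μ, L ω ≤ u) :
    ∀ η : ℝ, 0 < η → η < ηbar →
      Integrable (fun ω => Real.exp (-η * L ω)) μ →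
      ∫ ω, L ω ∂μ
        ≤ ((η * u + 1) / (1 - η / ηbar))
            * ((1/η) * (1 - ∫ ω, Real.exp (-η * L ω) ∂μ)) := by
  intro η hη hlt hint
  have hηb : (0:ℝ) < ηbar := hηbar
  set c : ℝ := (η*u+1)/(1-η/ηbar) with hc
  set lam : ℝ := (c-1)/ηbar with hlam
  -- a.e. pointwise bound
  have hae : ∀ᵐ ω ∂μ, L ω ≤ c/η * (1 - Real.exp (-η * L ω))
      + lam * (Real.exp (-ηbar * L ω) - 1) := by
    filter_upwards [hbdd] with ω hω
    have := pointwise_ineq hη hlt hu (L ω) hω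
    simpa [hc, hlam, div_div] using this
  -- integrability of RHS
  have i1 : Integrable (fun ω => (1:ℝ) - Real.exp (-η * L ω)) μ :=
    (integrable_const (1:ℝ)).sub hint
  have i2 : Integrable (fun ω => Real.exp (-ηbar * L ω) - 1) μ :=
    hcentralInt.sub (integrable_const (1:ℝ))
  have i1' : Integrable (fun ω => c/η * ((1:ℝ) - Real.exp (-η * L ω))) μ := i1.const_mul _
  have i2' : Integrable (fun ω => lam * (Real.exp (-ηbar * L ω) - 1)) μ := i2.const_mul _
  have hint1 : Integrable (fun ω => c/η * (1 - Real.exp (-η * L ω))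
      + lam * (Real.exp (-ηbar * L ω) - 1)) μ := i1'.add i2'
  have hmono := integral_mono_ae hL hint1 hae
  have hsplit : ∫ ω, (c/η * (1 - Real.exp (-η * L ω))
      + lam * (Real.exp (-ηbar * L ω) - 1)) ∂μ
      = c/η * (1 - ∫ ω, Real.exp (-η * L ω) ∂μ)
        + lam * ((∫ ω, Real.exp (-ηbar * L ω) ∂μ) - 1) := by
    rw [integral_add i1' i2', MeasureTheory.integral_const_mul, MeasureTheory.integral_const_mul,
      integral_sub (integrable_const (1:ℝ)) hint,
      integral_sub hcentralInt (integrable_const (1:ℝ))]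
    simp [measure_univ]
  rw [hsplit] at hmono
  -- the lam-term is nonpositive
  have hρ : (0:ℝ) < 1 - η/ηbar := by
    have : η/ηbar < 1 := (div_lt_one hηb).mpr hlt
    linarith
  have hc1le : 1 ≤ c := by
    rw [hc, le_div_iff₀ hρ]
    have := div_pos hη hηb
    nlinarith [mul_pos hη hu]
  have hlampos : 0 ≤ lam := div_nonneg (by linarith) hηb.le
  have hlamterm : lam * ((∫ ω, Real.exp (-ηbar * L ω) ∂μ) - 1) ≤ 0 :=
    mul_nonpos_of_nonneg_of_nonpos hlampos (by linarith)
  calc ∫ ω, L ω ∂μ ≤ c/η * (1 - ∫ ω, Real.exp (-η * L ω) ∂μ)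
        + lam * ((∫ ω, Real.exp (-ηbar * L ω) ∂μ) - 1) := hmono
  _ ≤ c/η * (1 - ∫ ω, Real.exp (-η * L ω) ∂μ) := by linarith
  _ = c * ((1/η) * (1 - ∫ ω, Real.exp (-η * L ω) ∂μ)) := by ring
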